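/- Let f : ℝ^d → ℝ be twice continuously differentiable and suppose there are constants G_min > 0 and L ≥ 0 such that ‖∇f(θ)‖₂ ≥ G_min and ‖∇²f(θ)‖ ≤ L (operator norm) for all θ ∈ ℝ^d. Then the normalized gradient map θ ↦ ∇f(θ)/‖∇f(θ)‖₂ is Lipschitz continuous with Lipschitz constant L/G_min. -/

import Mathlib

open InnerProductSpace

lemma norm_unit_sub_unit_le {E : Type*} [NormedAddCommGroup E] [InnerProductSpace ℝ E]
    (u v : E) (G : ℝ) (hG : 0 < G) (hu : G ≤ ‖u‖) (hv : G ≤ ‖v‖) :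
    ‖‖u‖⁻¹ • u - ‖v‖⁻¹ • v‖ ≤ ‖u - v‖ / G := by
  set s := ‖u‖ with hs
  set t := ‖v‖ with ht
  have hs0 : 0 < s := lt_of_lt_of_le hG hu
  have ht0 : 0 < t := lt_of_lt_of_le hG hv
  have hsq : ‖‖u‖⁻¹ • u - ‖v‖⁻¹ • v‖ ^ 2 ≤ (‖u - v‖ / G) ^ 2 := by
    have e1 : ‖‖u‖⁻¹ • u - ‖v‖⁻¹ • v‖ ^ 2
        = ‖‖u‖⁻¹ • u‖ ^ 2 - 2 * inner ℝ (‖u‖⁻¹ • u) (‖v‖⁻¹ • v) + ‖‖v‖⁻¹ • v‖ ^ 2 :=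
      norm_sub_sq_real _ _
    have e2 : ‖u - v‖ ^ 2 = ‖u‖ ^ 2 - 2 * inner ℝ u v + ‖v‖ ^ 2 := norm_sub_sq_real u v
    have hna : ‖‖u‖⁻¹ • u‖ = 1 := by
      rw [norm_smul, norm_inv, norm_norm]
      exact inv_mul_cancel₀ (ne_of_gt hs0)
    have hnb : ‖‖v‖⁻¹ • v‖ = 1 := by
      rw [norm_smul, norm_inv, norm_norm]
      exact inv_mul_cancel₀ (ne_of_gt ht0)
    have hi : (inner ℝ (‖u‖⁻¹ • u) (‖v‖⁻¹ • v) : ℝ) = s⁻¹ * t⁻¹ * inner ℝ u v := by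
      rw [real_inner_smul_left, real_inner_smul_right]; ring
    set p : ℝ := inner ℝ u v with hp
    have hcs : p ≤ s * t := real_inner_le_norm u v
    have hcs' : -(s * t) ≤ p := neg_le_of_neg_le (by
      have := real_inner_le_norm (-u) v
      simpa [inner_neg_left] using this)
    rw [e1, hna, hnb, hi, div_pow, e2]
    rw [le_div_iff₀ (by positivity : (0:ℝ) < G ^ 2), ← hs, ← ht]
    have key : G ^ 2 * (1 ^ 2 - 2 * (s⁻¹ * t⁻¹ * p) + 1 ^ 2) ≤ s ^ 2 - 2 * p + t ^ 2 := by
      have h1 : s⁻¹ * t⁻¹ * p * (s * t) = p := by field_simp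
      nlinarith [sq_nonneg (s - t), sq_nonneg (s*t - G^2), mul_pos hs0 ht0,
        mul_pos (mul_pos hs0 ht0) (mul_pos hs0 ht0), sq_nonneg (s*t + p),
        sq_nonneg (s*t - p), mul_le_mul_of_nonneg_left hcs (le_of_lt (mul_pos hG hG)),
        mul_le_mul hu hv hG.le hs0.le]
    nlinarith [key]
  have h1 : (0:ℝ) ≤ ‖u - v‖ / G := by positivity
  nlinarith [norm_nonneg (‖u‖⁻¹ • u - ‖v‖⁻¹ • v), hsq]

/-- **The normalized gradient field is `L/G_min`-Lipschitz.** If `f` is C² with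
`‖∇f‖ ≥ G_min > 0` everywhere and `‖∇²f‖ ≤ L` everywhere, then
`θ ↦ ∇f(θ)/‖∇f(θ)‖` is Lipschitz with constant `L/G_min`. -/
theorem normalized_gradient_lipschitz {d : ℕ}
    (f : EuclideanSpace ℝ (Fin d) → ℝ) (hf : ContDiff ℝ 2 f)
    (Gmin L : ℝ) (hGmin : 0 < Gmin) (hL : 0 ≤ L)
    (hgrad : ∀ θ : EuclideanSpace ℝ (Fin d), Gmin ≤ ‖gradient f θ‖)
    (hHess : ∀ θ : EuclideanSpace ℝ (Fin d), ‖fderiv ℝ (gradient f) θ‖ ≤ L) :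
    ∀ x y : EuclideanSpace ℝ (Fin d),
      ‖‖gradient f x‖⁻¹ • gradient f x - ‖gradient f y‖⁻¹ • gradient f y‖
        ≤ (L / Gmin) * ‖x - y‖ := by
  intro x y
  -- gradient is differentiable
  have hgd : Differentiable ℝ (gradient f) := by
    have h1 : Differentiable ℝ (fderiv ℝ f) :=
      (hf.fderiv_right (m := 1) (by norm_num)).differentiable one_ne_zero
    have : gradient f = fun θ => (toDual ℝ (EuclideanSpace ℝ (Fin d))).symm (fderiv ℝ f θ) := rfl
    rw [this]
    exact (toDual ℝ (EuclideanSpace ℝ (Fin d))).symm.toContinuousLinearEquiv.differentiable.comp h1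
  -- gradient is L-Lipschitz
  have hlip : ‖gradient f x - gradient f y‖ ≤ L * ‖x - y‖ := by
    have := (convex_univ : Convex ℝ (Set.univ : Set (EuclideanSpace ℝ (Fin d)))).norm_image_sub_le_of_norm_fderiv_le
      (fun θ _ => (hgd θ)) (fun θ _ => hHess θ) (Set.mem_univ y) (Set.mem_univ x)
    simpa [norm_sub_rev] using this
  calc ‖‖gradient f x‖⁻¹ • gradient f x - ‖gradient f y‖⁻¹ • gradient f y‖
      ≤ ‖gradient f x - gradient f y‖ / Gmin :=
        norm_unit_sub_unit_le _ _ Gmin hGmin (hgrad x) (hgrad y)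
    _ ≤ (L * ‖x - y‖) / Gmin := by
        gcongr
    _ = (L / Gmin) * ‖x - y‖ := by ring
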